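/- (Theorem 2.) Let Σ be a finite alphabet and let B = ⟨β, {B_σ}_{σ∈Σ}, τ⟩ be a weighted finite automaton with k states computing g(h) = βᵀ B_h τ, where B_h = B_{h₁}⋯B_{hₙ} for h = h₁⋯hₙ. Let γ ≥ 0, set M = Σ_{σ∈Σ} B_σ, and suppose ‖γ·M‖ < 1 for a submultiplicative matrix norm making ℝ^{k×k} a Banach algebra (e.g. the L∞ operator norm). Then I − γ·M is invertible, and for every word h ∈ Σ*, the series Σ_{n=0}^∞ γⁿ · (Σ over words z ∈ Σ* of length n of βᵀ B_h B_z τ) converges, with sum equal to βᵀ B_h (I − γ·M)^{-1} τ. In particular, the WFA A = ⟨β, {B_σ}_{σ∈Σ}, (I − γ Σ_{σ∈Σ} B_σ)^{-1} τ⟩ computes the function Ṽ(h) = Σ_{z∈Σ*} γ^{|z|} g(hz). -/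

import Mathlib

open Matrix

attribute [local instance] Matrix.linftyOpNormedRing
attribute [local instance] Matrix.linftyOpNormedSpace

private lemma sum_ofFn_prod {Γ : Type} [Fintype Γ] {k : ℕ}
    (B : Γ → Matrix (Fin k) (Fin k) ℝ) :
    ∀ n : ℕ, ∑ z : Fin n → Γ, ((List.ofFn z).map B).prod = (∑ σ, B σ) ^ n
  | 0 => by simp
  | n + 1 => by
    rw [Fintype.sum_equiv (Fin.consEquiv fun _ : Fin (n + 1) => Γ).symm
        (fun z => ((List.ofFn z).map B).prod)
        (fun p => B p.1 * ((List.ofFn p.2).map B).prod)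
        (fun z => by simp only [List.ofFn_succ, List.map_cons, List.prod_cons]; rfl)]
    rw [Fintype.sum_prod_type]
    simp_rw [← Finset.mul_sum, ← Finset.sum_mul, sum_ofFn_prod B n, pow_succ']

/-- (Theorem 2.) Let `B = ⟨β, {B_σ}, τ⟩` be a WFA computing `g(h) = βᵀ B_h τ`, let
`γ ≥ 0`, and let `M = ∑ σ, B σ` satisfy `‖γ • M‖ < 1` for the L∞ operator norm (which
makes `ℝ^{k×k}` a Banach algebra). Then `I - γ • M` is invertible, and for every word
`h`, the series `∑ₙ γⁿ · (∑_{|z| = n} g (h ++ z))` (words of length `n` identified with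
functions `Fin n → Γ`) converges to `βᵀ B_h (I - γ • M)⁻¹ τ`; i.e. the WFA
`A = ⟨β, {B_σ}, (I - γ • M)⁻¹ τ⟩` computes `Ṽ(h) = ∑_{z ∈ Σ*} γ^{|z|} g (h z)`. -/
theorem wfa_computes_discounted_value
    {Γ : Type} [Fintype Γ] {k : ℕ}
    (β τ : Fin k → ℝ) (B : Γ → Matrix (Fin k) (Fin k) ℝ)
    (g : List Γ → ℝ)
    (hg : ∀ h : List Γ, g h = β ⬝ᵥ ((h.map B).prod *ᵥ τ))
    (γ : ℝ) (hγ : 0 ≤ γ)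
    (M : Matrix (Fin k) (Fin k) ℝ) (hM : M = ∑ σ, B σ)
    (hnorm : ‖γ • M‖ < 1) :
    IsUnit (1 - γ • M) ∧
      ∀ h : List Γ,
        HasSum (fun n : ℕ => γ ^ n * ∑ z : Fin n → Γ, g (h ++ List.ofFn z))
          (β ⬝ᵥ (((h.map B).prod * (1 - γ • M)⁻¹) *ᵥ τ)) := by
  refine ⟨isUnit_one_sub_of_norm_lt_one hnorm, fun h => ?_⟩
  have hgeo : HasSum (fun n : ℕ => (γ • M) ^ n) ((1 - γ • M)⁻¹) := by
    have := hasSum_geom_series_inverse (γ • M) hnorm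
    rwa [← Matrix.nonsing_inv_eq_ringInverse] at this
  let L : Matrix (Fin k) (Fin k) ℝ →ₗ[ℝ] ℝ :=
    { toFun := fun X => β ⬝ᵥ (((h.map B).prod * X) *ᵥ τ)
      map_add' := fun x y => by simp [mul_add, Matrix.add_mulVec, dotProduct_add]
      map_smul' := fun c x => by
        simp [Matrix.mul_smul, Matrix.smul_mulVec, dotProduct_smul] }
  have hmap := hgeo.map L.toAddMonoidHom L.continuous_of_finiteDimensional
  have hterm : ∀ n : ℕ,
      γ ^ n * ∑ z : Fin n → Γ, g (h ++ List.ofFn z) = L ((γ • M) ^ n) := by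
    intro n
    have h1 : ∑ z : Fin n → Γ, g (h ++ List.ofFn z) = L (M ^ n) := by
      rw [hM, ← sum_ofFn_prod B n, map_sum]
      refine Finset.sum_congr rfl fun z _ => ?_
      rw [hg, List.map_append, List.prod_append]
      rfl
    rw [h1, smul_pow, ← smul_eq_mul, ← L.map_smul]
  rw [funext hterm]
  exact hmap
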